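/- Let F₂ be the free group on two generators g₁, g₂ and let ℓ²(F₂) be the Hilbert space of square-summable complex-valued functions on F₂. For g ∈ F₂ let L_g and R_g be the left and right translation unitaries on ℓ²(F₂), given by (L_g ξ)(h) = ξ(g⁻¹h) and (R_g ξ)(h) = ξ(hg). Then there is no unitary operator u on ℓ²(F₂) such that u R_g = R_g u for all g ∈ F₂ and u L_{g₁} u⁻¹ = L_{g₂} and u L_{g₂} u⁻¹ = L_{g₁}. -/

import Mathlib

open scoped ENNReal

noncomputable section

/-- The free group `F₂` on two generators. -/
abbrev F₂ : Type := FreeGroup (Fin 2)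

/-- The first generator `g₁` of `F₂`. -/
def g₁ : F₂ := FreeGroup.of 0

/-- The second generator `g₂` of `F₂`. -/
def g₂ : F₂ := FreeGroup.of 1

/-- The Hilbert space `ℓ²(F₂)` of square-summable complex functions on `F₂`. -/
abbrev l2F₂ := lp (fun _ : F₂ => ℂ) 2

lemma memℓp_comp_equiv {α β : Type*} {f : β → ℂ} (e : α ≃ β) (hf : Memℓp f 2) :
    Memℓp (fun a => f (e a)) 2 := by
  apply memℓp_gen
  exact (e.summable_iff (f := fun b => ‖f b‖ ^ (2 : ℝ≥0∞).toReal)).mpr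
    (hf.summable (by norm_num))

/-- The linear isometry of `ℓ²` spaces induced by composition with an equivalence of the
index sets. -/
def lpCompEquiv {α β : Type*} (e : α ≃ β) :
    lp (fun _ : β => ℂ) 2 ≃ₗᵢ[ℂ] lp (fun _ : α => ℂ) 2 where
  toFun f := ⟨fun a => f (e a), memℓp_comp_equiv e (lp.memℓp f)⟩
  invFun f := ⟨fun b => f (e.symm b), memℓp_comp_equiv e.symm (lp.memℓp f)⟩
  left_inv f := by apply lp.ext; funext b; simp
  right_inv f := by apply lp.ext; funext a; simp
  map_add' f g := by apply lp.ext; funext a; rfl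
  map_smul' c f := by apply lp.ext; funext a; rfl
  norm_map' f := by
    rw [lp.norm_eq_tsum_rpow (by norm_num), lp.norm_eq_tsum_rpow (by norm_num)]
    congr 1
    exact e.tsum_eq (fun b => ‖f b‖ ^ (2 : ℝ≥0∞).toReal)

/-- The left translation unitary `L g` on `ℓ²(F₂)`, given by `(L g ξ) h = ξ (g⁻¹ * h)`. -/
def L (g : F₂) : l2F₂ →L[ℂ] l2F₂ :=
  (lpCompEquiv ((Equiv.mulLeft g).symm)).toLinearIsometry.toContinuousLinearMap

/-- The right translation unitary `R g` on `ℓ²(F₂)`, given by `(R g ξ) h = ξ (h * g)`. -/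
def R (g : F₂) : l2F₂ →L[ℂ] l2F₂ :=
  (lpCompEquiv (Equiv.mulRight g)).toLinearIsometry.toContinuousLinearMap

@[simp] lemma L_def (g : F₂) (ξ : l2F₂) (h : F₂) : L g ξ h = ξ (g⁻¹ * h) := rfl

@[simp] lemma R_def (g : F₂) (ξ : l2F₂) (h : F₂) : R g ξ h = ξ (h * g) := rfl

/-- The classical fact reproved in Example 2.6 of Magajna, "Pointwise approximation by
elementary complete contractions": there is no unitary `u` on `ℓ²(F₂)` commuting with all right
translations `R g` and conjugating `L g₁` to `L g₂` and `L g₂` to `L g₁` (the flip automorphism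
of the group von Neumann algebra of `F₂` is not inner). -/
-- The exponent-sum homomorphism counting occurrences of the first generator.
def expSum : F₂ →* Multiplicative ℤ :=
  FreeGroup.lift (fun i => if i = 0 then Multiplicative.ofAdd 1 else 1)

lemma expSum_g₁ : expSum g₁ = Multiplicative.ofAdd 1 := by
  simp [expSum, g₁]

lemma expSum_g₂ : expSum g₂ = 1 := by
  simp [expSum, g₂]

lemma orbit_injective (k : F₂) :
    Function.Injective (fun n : ℕ => (g₂⁻¹) ^ n * k * g₁ ^ n) := by
  intro m n hmn
  have := congrArg expSum hmn
  simp only [map_mul, map_pow, map_inv, expSum_g₁, expSum_g₂, inv_one, one_pow, one_mul] at this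
  have h2 := mul_left_cancel this
  have : (m : ℤ) = (n : ℤ) := by
    have := congrArg Multiplicative.toAdd h2
    simpa using this
  exact_mod_cast this

theorem no_unitary_flip :
    ¬ ∃ u : l2F₂ →L[ℂ] l2F₂, u ∈ unitary (l2F₂ →L[ℂ] l2F₂) ∧
      (∀ g : F₂, u * R g = R g * u) ∧
      u * L g₁ * star u = L g₂ ∧ u * L g₂ * star u = L g₁ := by
  rintro ⟨u, hu, hR, h1, -⟩
  have hstar : star u * u = 1 := hu.1
  -- δ is the point mass at the identity
  set δ : l2F₂ := lp.single 2 (1 : F₂) (1 : ℂ) with hδ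
  set ξ : l2F₂ := u δ with hξ
  -- from h1: u * L g₁ = L g₂ * u
  have hcomm : u * L g₁ = L g₂ * u := by
    calc u * L g₁ = u * L g₁ * (star u * u) := by rw [hstar, mul_one]
    _ = (u * L g₁ * star u) * u := by rw [mul_assoc, mul_assoc, mul_assoc]
    _ = L g₂ * u := by rw [h1]
  -- L g₁ δ = R g₁⁻¹ δ
  have hLR : L g₁ δ = R g₁⁻¹ δ := by
    apply lp.ext
    funext h
    simp only [L_def, R_def, hδ]
    rw [lp.single_apply, lp.single_apply]
    by_cases hh : h = g₁
    · subst hh; simp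
    · rw [Pi.single_eq_of_ne (by intro hc; exact hh (inv_mul_eq_one.mp hc).symm),
        Pi.single_eq_of_ne (by intro hc; exact hh (mul_inv_eq_one.mp hc))]
  -- key invariance: ξ (g₂⁻¹ * k * g₁) = ξ k for all k
  have hinv : ∀ k : F₂, ξ (g₂⁻¹ * k * g₁) = ξ k := by
    intro k
    have e1 : u (L g₁ δ) = L g₂ ξ := by
      have := congrFun (congrArg (fun T : l2F₂ →L[ℂ] l2F₂ => T.toFun) hcomm) δ
      simpa [ContinuousLinearMap.mul_apply] using this
    have e2 : u (R g₁⁻¹ δ) = R g₁⁻¹ ξ := by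
      have := congrFun (congrArg (fun T : l2F₂ →L[ℂ] l2F₂ => T.toFun) (hR g₁⁻¹)) δ
      simpa [ContinuousLinearMap.mul_apply] using this
    have e3 : R g₁⁻¹ ξ = L g₂ ξ := by rw [← e2, ← e1, hLR]
    have := congrFun (congrArg (fun f : l2F₂ => (f : F₂ → ℂ)) e3) (k * g₁)
    simp only [L_def, R_def] at this
    rw [mul_inv_cancel_right, ← mul_assoc] at this
    exact this.symm
  -- iterate: ξ ((g₂⁻¹)^n * k * g₁^n) = ξ k
  have hiter : ∀ (k : F₂) (n : ℕ), ξ ((g₂⁻¹) ^ n * k * g₁ ^ n) = ξ k := by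
    intro k n
    induction n with
    | zero => simp
    | succ n ih =>
      have : (g₂⁻¹) ^ (n + 1) * k * g₁ ^ (n + 1)
          = g₂⁻¹ * ((g₂⁻¹) ^ n * k * g₁ ^ n) * g₁ := by
        rw [pow_succ, pow_succ']
        group
      rw [this, hinv, ih]
  -- summability forces ξ = 0
  have hzero : ∀ k : F₂, ξ k = 0 := by
    intro k
    have hs : Summable (fun h : F₂ => ‖ξ h‖ ^ (2 : ℝ≥0∞).toReal) :=
      (lp.memℓp ξ).summable (by norm_num)
    have hs2 : Summable (fun n : ℕ => ‖ξ ((g₂⁻¹) ^ n * k * g₁ ^ n)‖ ^ (2 : ℝ≥0∞).toReal) :=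
      hs.comp_injective (orbit_injective k)
    have hs3 : Summable (fun _ : ℕ => ‖ξ k‖ ^ (2 : ℝ≥0∞).toReal) := by
      convert hs2 using 2 with n
      rw [hiter]
    have hc : ‖ξ k‖ ^ (2 : ℝ≥0∞).toReal = 0 := (summable_const_iff _).mp hs3
    have h2 : ‖ξ k‖ ^ (2 : ℝ≥0∞).toReal = ‖ξ k‖ ^ (2 : ℕ) := by
      rw [show (2 : ℝ≥0∞).toReal = ((2 : ℕ) : ℝ) by norm_num, Real.rpow_natCast]
    rw [h2] at hc
    have hn : ‖(ξ : F₂ → ℂ) k‖ = 0 := by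
      exact pow_eq_zero_iff (M₀ := ℝ) (n := 2) (by norm_num) |>.mp hc
    exact norm_eq_zero.mp hn
  -- but ξ = u δ with δ ≠ 0 and u injective
  have hξ0 : ξ = 0 := by
    apply lp.ext
    funext h
    exact hzero h
  have hδ0 : δ = 0 := by
    have : star u (u δ) = δ := by
      have := congrFun (congrArg (fun T : l2F₂ →L[ℂ] l2F₂ => T.toFun) hstar) δ
      simpa [ContinuousLinearMap.mul_apply] using this
    rw [← this, ← hξ, hξ0, map_zero]
  have : δ (1 : F₂) = 1 := by
    rw [hδ, lp.single_apply]
    simp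
  rw [hδ0] at this
  simp at this


end
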